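/- Let y : [x₀, b] → ℝ be twice differentiable with y'' (x) ≥ y(x) for all x, y > 0 on [x₀, b], and y'(b) ≤ 0. Then for all x ∈ [x₀, b], y(x₀) ≥ cosh(x - x₀)·y(x) - sinh(x - x₀)·y'(x) ≥ (1/2)·e^{x - x₀}·y(x). -/

import Mathlib

open Real Set

/-- Sturm-type comparison: if `y'' ≥ y`, `y > 0` on `[x₀, b]` and `y'(b) ≤ 0`,
then `y(x₀) ≥ cosh(x-x₀) y(x) - sinh(x-x₀) y'(x) ≥ (1/2) e^{x-x₀} y(x)`. -/
theorem stmt3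
    (y : ℝ → ℝ) (x₀ b : ℝ) (hx₀b : x₀ ≤ b)
    (hdiff : ∀ x ∈ Icc x₀ b, DifferentiableAt ℝ y x)
    (hdiff' : ∀ x ∈ Icc x₀ b, DifferentiableAt ℝ (deriv y) x)
    (hODE : ∀ x ∈ Icc x₀ b, deriv (deriv y) x ≥ y x)
    (hpos : ∀ x ∈ Icc x₀ b, 0 < y x)
    (hb : deriv y b ≤ 0) :
    ∀ x ∈ Icc x₀ b,
      y x₀ ≥ Real.cosh (x - x₀) * y x - Real.sinh (x - x₀) * deriv y x ∧
      Real.cosh (x - x₀) * y x - Real.sinh (x - x₀) * deriv y x ≥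
        (1 / 2) * Real.exp (x - x₀) * y x := by
  -- y' is monotone, hence y' ≤ 0 on the interval
  have hcont' : ContinuousOn (deriv y) (Icc x₀ b) := fun z hz =>
    (hdiff' z hz).continuousAt.continuousWithinAt
  have hmono : MonotoneOn (deriv y) (Icc x₀ b) := by
    apply monotoneOn_of_deriv_nonneg (convex_Icc _ _) hcont'
    · intro z hz
      rw [interior_Icc] at hz
      exact (hdiff' z (Ioo_subset_Icc_self hz)).differentiableWithinAt
    · intro z hz
      rw [interior_Icc] at hz
      have hz' := Ioo_subset_Icc_self hz
      exact le_trans (hpos z hz').le (hODE z hz')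
  have hy'le : ∀ z ∈ Icc x₀ b, deriv y z ≤ 0 := fun z hz =>
    le_trans (hmono hz (right_mem_Icc.2 hx₀b) hz.2) hb
  set g : ℝ → ℝ := fun z => Real.cosh (z - x₀) * y z - Real.sinh (z - x₀) * deriv y z with hgdef
  have hg : ∀ z ∈ Icc x₀ b,
      HasDerivAt g (Real.sinh (z - x₀) * (y z - deriv (deriv y) z)) z := by
    intro z hz
    have h1 : HasDerivAt (fun z => z - x₀) 1 z := (hasDerivAt_id z).sub_const x₀
    have hc : HasDerivAt (fun z => Real.cosh (z - x₀)) (Real.sinh (z - x₀)) z := by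
      have h := (Real.hasDerivAt_cosh (z - x₀)).comp z h1
      rw [mul_one] at h
      exact h
    have hs : HasDerivAt (fun z => Real.sinh (z - x₀)) (Real.cosh (z - x₀)) z := by
      have h := (Real.hasDerivAt_sinh (z - x₀)).comp z h1
      rw [mul_one] at h
      exact h
    have hy : HasDerivAt y (deriv y z) z := (hdiff z hz).hasDerivAt
    have hy' : HasDerivAt (deriv y) (deriv (deriv y) z) z := (hdiff' z hz).hasDerivAt
    have := (hc.mul hy).sub (hs.mul hy')
    refine this.congr_deriv ?_
    ring
  have hganti : AntitoneOn g (Icc x₀ b) := by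
    apply antitoneOn_of_deriv_nonpos (convex_Icc _ _)
    · exact fun z hz => (hg z hz).continuousAt.continuousWithinAt
    · intro z hz
      rw [interior_Icc] at hz
      exact (hg z (Ioo_subset_Icc_self hz)).differentiableAt.differentiableWithinAt
    · intro z hz
      rw [interior_Icc] at hz
      have hz' := Ioo_subset_Icc_self hz
      rw [(hg z hz').deriv]
      have h1 : 0 ≤ Real.sinh (z - x₀) := Real.sinh_nonneg_iff.2 (by linarith [hz.1])
      have h2 : y z - deriv (deriv y) z ≤ 0 := by linarith [hODE z hz']
      exact mul_nonpos_of_nonneg_of_nonpos h1 h2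
  intro x hx
  have hgx : g x ≤ g x₀ := hganti (left_mem_Icc.2 hx₀b) hx hx.1
  have hgx₀ : g x₀ = y x₀ := by simp [hgdef]
  constructor
  · rw [hgx₀] at hgx; exact hgx
  · have ht : 0 ≤ x - x₀ := by linarith [hx.1]
    have hsinh : 0 ≤ Real.sinh (x - x₀) := Real.sinh_nonneg_iff.2 ht
    have hy' := hy'le x hx
    have hyx := hpos x hx
    have hcosh : Real.cosh (x - x₀) = (Real.exp (x - x₀) + Real.exp (-(x - x₀))) / 2 :=
      Real.cosh_eq _
    have hexp : 0 < Real.exp (-(x - x₀)) := Real.exp_pos _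
    nlinarith [mul_nonneg hsinh (neg_nonneg.2 hy')]
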